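/- Let T > 0, M > 0, C ∈ ℝ, and let u : ℝ → ℝ be measurable with |u(t)| ≤ M for almost every t ∈ [0, T] and ∫₀ᵀ u(τ) dτ = C. Set t* = (T + C/M)/2, so that t* ∈ [0, T], and let û(t) = M for t ∈ [0, t*] and û(t) = −M for t ∈ (t*, T]. Then ∫₀ᵀ (∫₀ᵗ u(τ) dτ) dt ≤ ∫₀ᵀ (∫₀ᵗ û(τ) dτ) dt. -/

import Mathlib

open MeasureTheory intervalIntegral

theorem stmt18 (T M C : ℝ) (hT : 0 < T) (hM : 0 < M)
    (u : ℝ → ℝ) (hu : Measurable u)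
    (hbound : ∀ᵐ t ∂(volume.restrict (Set.Icc (0 : ℝ) T)), |u t| ≤ M)
    (hC : (∫ τ in (0 : ℝ)..T, u τ) = C)
    (tstar : ℝ) (htstar : tstar = (T + C / M) / 2)
    (uhat : ℝ → ℝ) (huhat : uhat = fun t => if t ≤ tstar then M else -M) :
    tstar ∈ Set.Icc (0 : ℝ) T ∧
    (∫ t in (0 : ℝ)..T, (∫ τ in (0 : ℝ)..t, u τ)) ≤
      ∫ t in (0 : ℝ)..T, (∫ τ in (0 : ℝ)..t, uhat τ) := by
  have hT0 : (0:ℝ) ≤ T := hT.le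
  -- Integrability of u on [0, T]
  have hInt : IntegrableOn u (Set.Icc (0:ℝ) T) := by
    refine Measure.integrableOn_of_bounded (M := M) measure_Icc_lt_top.ne
      hu.aestronglyMeasurable ?_
    simpa [Real.norm_eq_abs] using hbound
  have hIi : ∀ a b : ℝ, 0 ≤ a → a ≤ b → b ≤ T → IntervalIntegrable u volume a b := by
    intro a b ha hab hb
    rw [intervalIntegrable_iff]
    refine hInt.mono_set ?_
    rw [Set.uIoc_of_le hab]
    exact (Set.Ioc_subset_Icc_self).trans (Set.Icc_subset_Icc ha hb)
  -- basic bounds on interval integrals of u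
  have hub : ∀ a b : ℝ, 0 ≤ a → a ≤ b → b ≤ T →
      (∫ τ in a..b, u τ) ≤ M * (b - a) := by
    intro a b ha hab hbT
    have hbd : ∀ᵐ t ∂(volume.restrict (Set.Icc a b)), u t ≤ M := by
      have h := ae_restrict_of_ae_restrict_of_subset
        (Set.Icc_subset_Icc ha hbT) hbound
      filter_upwards [h] with t ht using (abs_le.mp ht).2
    have := integral_mono_ae_restrict (μ := volume) (f := u) (g := fun _ => M)
      hab (hIi a b ha hab hbT) intervalIntegrable_const hbd
    simpa [mul_comm] using this
  have hlb : ∀ a b : ℝ, 0 ≤ a → a ≤ b → b ≤ T →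
      -(M * (b - a)) ≤ (∫ τ in a..b, u τ) := by
    intro a b ha hab hbT
    have hbd : ∀ᵐ t ∂(volume.restrict (Set.Icc a b)), -M ≤ u t := by
      have h := ae_restrict_of_ae_restrict_of_subset
        (Set.Icc_subset_Icc ha hbT) hbound
      filter_upwards [h] with t ht using (abs_le.mp ht).1
    have := integral_mono_ae_restrict (μ := volume) (f := fun _ => -M) (g := u)
      hab intervalIntegrable_const (hIi a b ha hab hbT) hbd
    simpa [mul_comm] using this
  have hCub : C ≤ M * T := by
    have := hub 0 T le_rfl hT0 le_rfl
    simpa [hC] using this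
  have hClb : -(M * T) ≤ C := by
    have := hlb 0 T le_rfl hT0 le_rfl
    simpa [hC] using this
  have hCMub : C / M ≤ T := by rw [div_le_iff₀ hM]; linarith
  have hCMlb : -T ≤ C / M := by
    rw [neg_le, ← neg_div, div_le_iff₀ hM]; linarith
  have hts : tstar ∈ Set.Icc (0:ℝ) T := by
    constructor <;> rw [htstar] <;> linarith
  refine ⟨hts, ?_⟩
  -- uhat measurable and bounded
  have huhatm : Measurable uhat := by
    subst huhat
    exact Measurable.ite (measurableSet_le measurable_id measurable_const)
      measurable_const measurable_const
  have huhatbd : ∀ t, |uhat t| ≤ M := by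
    intro t; subst huhat; dsimp only
    split <;> simp [abs_of_pos hM, abs_of_neg (neg_neg_of_pos hM), le_abs_self, hM.le]
  have hIhat : ∀ a b : ℝ, IntervalIntegrable uhat volume a b := by
    intro a b
    rw [intervalIntegrable_iff]
    refine Measure.integrableOn_of_bounded (M := M) (by rw [Set.uIoc_eq_union]; exact ((measure_union_le _ _).trans_lt (by simp [measure_Ioc_lt_top])).ne) ?_ ?_
    · exact huhatm.aestronglyMeasurable
    · exact ae_of_all _ fun t => by simpa [Real.norm_eq_abs] using huhatbd t
  -- formula for the primitive of uhat
  have hMts : 2 * (M * tstar) = M * T + C := by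
    rw [htstar]; field_simp
  have hGhat : ∀ t, 0 ≤ t → t ≤ T →
      (∫ τ in (0:ℝ)..t, uhat τ) = if t ≤ tstar then M * t else C + M * (T - t) := by
    intro t ht htT
    by_cases h : t ≤ tstar
    · rw [if_pos h]
      have : ∀ τ ∈ Set.uIcc (0:ℝ) t, uhat τ = M := by
        intro τ hτ
        rw [Set.uIcc_of_le ht] at hτ
        subst huhat; exact if_pos (hτ.2.trans h)
      rw [intervalIntegral.integral_congr this]
      simp [mul_comm]
    · rw [if_neg h]
      push_neg at h
      have hsplit : (∫ τ in (0:ℝ)..tstar, uhat τ) + (∫ τ in tstar..t, uhat τ)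
          = ∫ τ in (0:ℝ)..t, uhat τ :=
        intervalIntegral.integral_add_adjacent_intervals (hIhat 0 tstar) (hIhat tstar t)
      have h1 : (∫ τ in (0:ℝ)..tstar, uhat τ) = M * tstar := by
        have : ∀ τ ∈ Set.uIcc (0:ℝ) tstar, uhat τ = M := by
          intro τ hτ
          rw [Set.uIcc_of_le hts.1] at hτ
          subst huhat; exact if_pos hτ.2
        rw [intervalIntegral.integral_congr this]
        simp [mul_comm]
      have h2 : (∫ τ in tstar..t, uhat τ) = -M * (t - tstar) := by
        rw [intervalIntegral.integral_of_le h.le]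
        rw [setIntegral_congr_fun measurableSet_Ioc
          (g := fun _ => -M) (fun τ hτ => by subst huhat; exact if_neg (not_le.mpr hτ.1))]
        simp [Real.volume_Ioc, ENNReal.toReal_ofReal (by linarith : (0:ℝ) ≤ t - tstar)]
        rw [max_eq_left (by linarith : (0:ℝ) ≤ t - tstar)]
        ring
      rw [← hsplit, h1, h2]
      linarith [hMts]
  -- pointwise inequality of primitives
  have hpt : ∀ t ∈ Set.Icc (0:ℝ) T,
      (∫ τ in (0:ℝ)..t, u τ) ≤ ∫ τ in (0:ℝ)..t, uhat τ := by
    intro t ht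
    rw [hGhat t ht.1 ht.2]
    by_cases h : t ≤ tstar
    · rw [if_pos h]
      have := hub 0 t le_rfl ht.1 ht.2
      simpa using this
    · rw [if_neg h]
      have hsplit : (∫ τ in (0:ℝ)..t, u τ) + (∫ τ in t..T, u τ) = C := by
        rw [← hC]
        exact intervalIntegral.integral_add_adjacent_intervals
          (hIi 0 t le_rfl ht.1 ht.2) (hIi t T ht.1 ht.2 le_rfl)
      have := hlb t T ht.1 ht.2 le_rfl
      linarith
  -- integrability of both primitives
  have hF : IntervalIntegrable (fun t => ∫ τ in (0:ℝ)..t, u τ) volume 0 T := by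
    refine ContinuousOn.intervalIntegrable ?_
    have := continuousOn_primitive_interval (a := (0:ℝ)) (b := T) (μ := volume)
      (f := u) (by rwa [Set.uIcc_of_le hT0])
    exact this
  have hG : IntervalIntegrable (fun t => ∫ τ in (0:ℝ)..t, uhat τ) volume 0 T := by
    refine ContinuousOn.intervalIntegrable ?_
    refine continuousOn_primitive_interval ?_
    refine Measure.integrableOn_of_bounded (M := M) (by rw [Set.uIcc_of_le hT0]; exact measure_Icc_lt_top.ne) huhatm.aestronglyMeasurable ?_
    exact ae_of_all _ fun t => by simpa [Real.norm_eq_abs] using huhatbd t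
  exact intervalIntegral.integral_mono_on hT0 hF hG hpt
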